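/- Under the Lie–Poisson realization hypotheses, let ε : Fin N → K be injective, let k : Fin M → K be constants, and for λ ∈ K with λ ≠ ε i for all i define Δ_λ(α) := Σ_i (λ − ε i)⁻¹ • (y α i) + algebraMap K B (k α). Then for all λ ≠ μ (both different from every ε i) and all α, β ∈ Fin M: {Δ_λ(α), Δ_μ(β)} = (μ − λ)⁻¹ • Σ_γ (c α β γ) • (Δ_λ(γ) − Δ_μ(γ)) (the defining relation of the rational Gaudin algebra). -/

import Mathlib

open scoped BigOperators

/-- A Poisson algebra structure over `K` on a commutative `K`-algebra `B`:
a `K`-bilinear bracket that is antisymmetric, satisfies the Jacobi identity and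
the Leibniz rule. -/
structure PoissonStructure (K B : Type*) [CommRing K] [CommRing B] [Algebra K B] where
  bracket : B →ₗ[K] B →ₗ[K] B
  antisymm : ∀ a b : B, bracket a b = - bracket b a
  jacobi : ∀ a b c : B,
    bracket a (bracket b c) + bracket b (bracket c a) + bracket c (bracket a b) = 0
  leibniz : ∀ a b c : B, bracket a (b * c) = bracket a b * c + b * bracket a c

/-- the rational Gaudin loop coproduct
`Δ_λ(α) = Σ_i (λ - ε i)⁻¹ • y α i + k α` satisfies the defining relations of the
rational Gaudin algebra. -/
theorem rational_gaudin_algebra_relation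
    {K B : Type*} [Field K] [CharZero K] [CommRing B] [Algebra K B]
    (P : PoissonStructure K B) {M N : ℕ} (hM : 0 < M) (hN : 0 < N)
    (c : Fin M → Fin M → Fin M → K)
    (y : Fin M → Fin N → B)
    (hsep : ∀ (α β : Fin M) (i j : Fin N), i ≠ j → P.bracket (y α i) (y β j) = 0)
    (hsame : ∀ (α β : Fin M) (i : Fin N),
      P.bracket (y α i) (y β i) = ∑ γ, c α β γ • y γ i)
    (ε : Fin N → K) (hε : Function.Injective ε)
    (k : Fin M → K)
    (Δ : K → Fin M → B)
    (hΔ : ∀ (l : K) (α : Fin M),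
      Δ l α = (∑ i, (l - ε i)⁻¹ • y α i) + algebraMap K B (k α)) :
    ∀ (l m : K), l ≠ m → (∀ i, l ≠ ε i) → (∀ i, m ≠ ε i) →
      ∀ (α β : Fin M),
        P.bracket (Δ l α) (Δ m β) =
          (m - l)⁻¹ • ∑ γ, c α β γ • (Δ l γ - Δ m γ) := by
  intro l m hlm hl hm α β
  have hone : ∀ a : B, P.bracket a (1 : B) = 0 := by
    intro a
    have h := P.leibniz a 1 1
    rw [one_mul, mul_one, one_mul] at h
    exact left_eq_add.mp h
  have hconst : ∀ (a : B) (r : K), P.bracket a (algebraMap K B r) = 0 := by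
    intro a r
    rw [Algebra.algebraMap_eq_smul_one, map_smul, hone, smul_zero]
  have hconst' : ∀ (r : K) (b : B), P.bracket (algebraMap K B r) b = 0 := by
    intro r b
    rw [P.antisymm, hconst, neg_zero]
  have hl' : ∀ i, l - ε i ≠ 0 := fun i => sub_ne_zero.mpr (hl i)
  have hm' : ∀ i, m - ε i ≠ 0 := fun i => sub_ne_zero.mpr (hm i)
  have hml : m - l ≠ 0 := sub_ne_zero.mpr (Ne.symm hlm)
  have hdiff : ∀ γ : Fin M,
      Δ l γ - Δ m γ = ∑ i, ((l - ε i)⁻¹ - (m - ε i)⁻¹) • y γ i := by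
    intro γ
    rw [hΔ l γ, hΔ m γ, add_sub_add_right_eq_sub, ← Finset.sum_sub_distrib]
    exact Finset.sum_congr rfl fun i _ => (sub_smul _ _ _).symm
  -- compute the left-hand side
  have lhs : P.bracket (Δ l α) (Δ m β) =
      ∑ i, ((l - ε i)⁻¹ * (m - ε i)⁻¹) • ∑ γ, c α β γ • y γ i := by
    rw [hΔ l α, hΔ m β, map_add, hconst, add_zero, map_add, LinearMap.add_apply,
      hconst', add_zero, map_sum]
    refine Finset.sum_congr rfl fun j _ => ?_
    rw [map_smul, map_sum, LinearMap.sum_apply]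
    rw [Finset.sum_eq_single j (fun i _ hij => by
      rw [map_smul, LinearMap.smul_apply, hsep α β i j hij, smul_zero]) (by simp)]
    rw [map_smul, LinearMap.smul_apply, hsame, smul_smul, mul_comm]
  rw [lhs]
  -- rewrite the right-hand side
  have rhs : (m - l)⁻¹ • ∑ γ, c α β γ • (Δ l γ - Δ m γ) =
      ∑ i, ((m - l)⁻¹ * ((l - ε i)⁻¹ - (m - ε i)⁻¹)) • ∑ γ, c α β γ • y γ i := by
    simp only [hdiff, Finset.smul_sum, smul_smul]
    rw [Finset.sum_comm]
    refine Finset.sum_congr rfl fun i _ => ?_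
    refine Finset.sum_congr rfl fun γ _ => ?_
    congr 1
    ring
  rw [rhs]
  refine Finset.sum_congr rfl fun i _ => ?_
  congr 1
  rw [inv_sub_inv (hl' i) (hm' i)]
  field_simp
  ring
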